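/- Let P have length m, T have length n ≤ 3m/2, and let Q have length q. Set d := δ_H(P,Q*) and d' := δ_H(T,Q*). Then the sequence h_j := δ_H(T[jq..jq+m), P), for 0 ≤ j ≤ (n−m)/q, contains at most d'(2d+1) indices j with h_j ≠ h_{j+1}, and, provided d > 0, at most 2d' indices j with h_j ≤ d/2. -/

import Mathlib

open List

variable {α : Type*}

/-- The fragment S[i..j) of a string (list) S. -/
def frag (S : List α) (i j : ℕ) : List α := (S.drop i).take (j - i)

/-- Q^∞[a..b): the fragment of the infinite repetition of Q from a (incl.) to b (excl.). -/
def repPrefix [Inhabited α] (Q : List α) (a b : ℕ) : List α :=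
  (List.range' a (b - a)).map (fun i => Q.getD (i % Q.length) default)

/-- Hamming distance of two strings of the same length (counted over positions of S). -/
def hamming [DecidableEq α] [Inhabited α] (S T : List α) : ℕ :=
  ((Finset.range S.length).filter
    (fun i => S.getD i default ≠ T.getD i default)).card

/-- δ_H(S, Q*): Hamming distance of S to the length-|S| prefix of Q^∞. -/
def hammingStar [DecidableEq α] [Inhabited α] (S Q : List α) : ℕ :=
  hamming S (repPrefix Q 0 S.length)

/-- Cost structure for edit distance (re-created: removed from Mathlib). -/
structure Levenshtein.Cost (α β δ : Type*) where
  delete : α → δ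
  insert : β → δ
  substitute : α → β → δ

/-- Unit costs, as in the former Mathlib `Levenshtein.defaultCost`. -/
def Levenshtein.defaultCost {α : Type*} [DecidableEq α] : Levenshtein.Cost α α ℕ where
  delete _ := 1
  insert _ := 1
  substitute a b := if a = b then 0 else 1

/-- Levenshtein distance with cost `C`, by the recursion the former Mathlib `levenshtein` satisfied. -/
def levenshtein {α β : Type*} (C : Levenshtein.Cost α β ℕ) : List α → List β → ℕ
  | [], [] => 0
  | x :: xs, [] => C.delete x + levenshtein C xs []
  | [], y :: ys => C.insert y + levenshtein C [] ys
  | x :: xs, y :: ys =>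
      min (C.delete x + levenshtein C xs (y :: ys))
        (min (C.insert y + levenshtein C (x :: xs) ys) (C.substitute x y + levenshtein C xs ys))
termination_by xs ys => xs.length + ys.length

/-- Edit (Levenshtein) distance. -/
def editDist [DecidableEq α] (S T : List α) : ℕ :=
  levenshtein Levenshtein.defaultCost S T

/-- A string is primitive if it is nonempty and not a proper power of a string. -/
def Primitive (Q : List α) : Prop :=
  Q ≠ [] ∧ ∀ (U : List α) (t : ℕ), 2 ≤ t → Q ≠ (List.replicate t U).flatten

/-- p is a period of S. -/
def IsPeriod [Inhabited α] (p : ℕ) (S : List α) : Prop :=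
  0 < p ∧ ∀ i, i + p < S.length → S.getD i default = S.getD (i + p) default

/-- per(S): the smallest period of S. -/
noncomputable def per [Inhabited α] (S : List α) : ℕ := sInf {p | IsPeriod p S}

/-- Occ^H_k(P,T): starting positions of k-mismatch occurrences of P in T. -/
def occH [DecidableEq α] [Inhabited α] (k : ℕ) (P T : List α) : Finset ℕ :=
  (Finset.range (T.length - P.length + 1)).filter
    (fun i => hamming P (frag T i (i + P.length)) ≤ k)

/-- Exact occurrences of B in T. -/
def occExact [DecidableEq α] (B T : List α) : Finset ℕ :=
  (Finset.range (T.length + 1)).filter (fun i => frag T i (i + B.length) = B)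

/-- Occ^E_k(P,T): starting positions of k-error (edit distance) occurrences of P in T. -/
def occE [DecidableEq α] (k : ℕ) (P T : List α) : Set ℕ :=
  {i | ∃ j, i ≤ j ∧ j ≤ T.length ∧ editDist P (frag T i j) ≤ k}

/-- δ_E^cyc(S,Q): minimum edit distance of S to any substring of Q^∞. -/
noncomputable def edCyc [DecidableEq α] [Inhabited α] (S Q : List α) : ℕ :=
  sInf {d | ∃ i j, i ≤ j ∧ d = editDist S (repPrefix Q i j)}

/-- δ_E(S,Q*): minimum edit distance of S to a prefix of Q^∞. -/
noncomputable def edStar [DecidableEq α] [Inhabited α] (S Q : List α) : ℕ :=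
  sInf {d | ∃ j, d = editDist S (repPrefix Q 0 j)}

/-- Minimum edit distance of T to a substring of Q^∞ starting at position x. -/
noncomputable def edStarAt [DecidableEq α] [Inhabited α] (T Q : List α) (x : ℕ) : ℕ :=
  sInf {d | ∃ j, x ≤ j ∧ d = editDist T (repPrefix Q x j)}

/-- Minimum edit distance of T to a substring of Q^∞ ending at a position ≡ y (mod |Q|). -/
noncomputable def edEndAt [DecidableEq α] [Inhabited α] (T Q : List α) (y : ℕ) : ℕ :=
  sInf {d | ∃ i j, i ≤ j ∧ j % Q.length = y % Q.length ∧ d = editDist T (repPrefix Q i j)}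

/-- Minimum edit distance of L to a substring of Q^∞ ending at a multiple of |Q|. -/
noncomputable def edEndMul [DecidableEq α] [Inhabited α] (L Q : List α) : ℕ :=
  sInf {d | ∃ i j, i ≤ j * Q.length ∧ d = editDist L (repPrefix Q i (j * Q.length))}

/-- The fragment S[i..j) of S is locked with respect to Q. -/
def Locked [DecidableEq α] [Inhabited α] (S Q : List α) (i j : ℕ) : Prop :=
  (∃ a : ℕ, edCyc (frag S i j) Q = editDist (frag S i j) (repPrefix Q 0 (a * Q.length))) ∨
  (j = S.length ∧ edCyc (frag S i j) Q = edStar (frag S i j) Q) ∨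
  (i = 0 ∧ edCyc (frag S i j) Q = edEndMul (frag S i j) Q) ∨
  (i = 0 ∧ j = S.length)

/-- rot^j(Q): rotation moving the last j (mod |Q|) characters to the front. -/
def rotR (Q : List α) (j : ℕ) : List α := Q.rotate (Q.length - j % Q.length)

/-- |Mis(T,Q*) ∩ [a,b)|. -/
def misCount [DecidableEq α] [Inhabited α] (T Q : List α) (a b : ℕ) : ℕ :=
  ((Finset.Ico a b).filter (fun i => i < T.length ∧
     T.getD i default ≠ Q.getD (i % Q.length) default)).card

/-- μ_j: the total weight of aligned mismatch pairs of P and T against Q^∞ at shift j·|Q|: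
a pair (τ = j|Q|+π, π) with π ∈ Mis(P,Q*), τ ∈ Mis(T,Q*) has weight 2 − δ_H(P[π],T[τ]). -/
def mu [DecidableEq α] [Inhabited α] (P T Q : List α) (j : ℕ) : ℕ :=
  ∑ π ∈ Finset.range P.length,
    if P.getD π default ≠ Q.getD (π % Q.length) default ∧
       j * Q.length + π < T.length ∧
       T.getD (j * Q.length + π) default ≠ Q.getD ((j * Q.length + π) % Q.length) default
    then (if P.getD π default = T.getD (j * Q.length + π) default then 2 else 1)
    else 0


set_option linter.unusedSectionVars false
section Aux
variable {α : Type*} [DecidableEq α] [Inhabited α]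

lemma repPrefix_getD (Q : List α) {L i : ℕ} (h : i < L) :
    (repPrefix Q 0 L).getD i default = Q.getD (i % Q.length) default := by
  simp [repPrefix, List.getD, List.getElem?_range', h]

lemma frag_length (T : List α) {a b : ℕ} (hb : b ≤ T.length) :
    (frag T a b).length = b - a := by
  simp [frag]; omega

lemma frag_getD (T : List α) {a b i : ℕ} (h : i < b - a) :
    (frag T a b).getD i default = T.getD (a + i) default := by
  simp [frag, List.getD, List.getElem?_take, h, List.getElem?_drop]

lemma hammingStar_eq_sum (P Q : List α) :
    hammingStar P Q = ∑ π ∈ Finset.range P.length,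
      (if P.getD π default ≠ Q.getD (π % Q.length) default then 1 else 0) := by
  rw [hammingStar, hamming, Finset.card_filter]
  refine Finset.sum_congr rfl fun π hπ => ?_
  rw [repPrefix_getD Q (Finset.mem_range.mp hπ)]

lemma misCount_eq_sum (T Q : List α) {m n : ℕ} (hT : T.length = n) (j : ℕ)
    (hjm : j * Q.length + m ≤ n) :
    misCount T Q (j * Q.length) (j * Q.length + m) =
      ∑ π ∈ Finset.range m,
        (if T.getD (j * Q.length + π) default ≠ Q.getD (π % Q.length) default
         then 1 else 0) := by
  rw [misCount, Finset.card_filter]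
  rw [show Finset.Ico (j * Q.length) (j * Q.length + m)
      = Finset.map (addLeftEmbedding (j * Q.length)) (Finset.range m) by
    rw [Finset.range_eq_Ico, Finset.map_add_left_Ico, add_zero]]
  rw [Finset.sum_map]
  refine Finset.sum_congr rfl fun π hπ => ?_
  have hπm := Finset.mem_range.mp hπ
  have h1 : j * Q.length + π < T.length := by omega
  have h2 : (j * Q.length + π) % Q.length = π % Q.length := by
    rw [add_comm]; exact Nat.add_mul_mod_self_right π j Q.length
  simp only [addLeftEmbedding_apply, h1, h2, true_and]

lemma hammingFrag_eq_sum (P T Q : List α) {m n : ℕ} (hP : P.length = m)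
    (hT : T.length = n) (j : ℕ) (hjm : j * Q.length + m ≤ n) :
    hamming (frag T (j * Q.length) (j * Q.length + m)) P =
      ∑ π ∈ Finset.range m,
        (if T.getD (j * Q.length + π) default ≠ P.getD π default then 1 else 0) := by
  have hlen : (frag T (j * Q.length) (j * Q.length + m)).length = m := by
    rw [frag_length T (by omega)]; omega
  rw [hamming, Finset.card_filter, hlen]
  refine Finset.sum_congr rfl fun π hπ => ?_
  have hπm := Finset.mem_range.mp hπ
  rw [frag_getD T (by omega : π < j * Q.length + m - j * Q.length)]

lemma mu_eq_sum (P T Q : List α) {m n : ℕ} (hP : P.length = m)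
    (hT : T.length = n) (j : ℕ) (hjm : j * Q.length + m ≤ n) :
    mu P T Q j = ∑ π ∈ Finset.range m,
      (if P.getD π default ≠ Q.getD (π % Q.length) default ∧
          T.getD (j * Q.length + π) default ≠ Q.getD (π % Q.length) default
       then (if P.getD π default = T.getD (j * Q.length + π) default then 2 else 1)
       else 0) := by
  rw [mu, hP]
  refine Finset.sum_congr rfl fun π hπ => ?_
  have hπm := Finset.mem_range.mp hπ
  have h1 : j * Q.length + π < T.length := by omega
  have h2 : (j * Q.length + π) % Q.length = π % Q.length := by
    rw [add_comm]; exact Nat.add_mul_mod_self_right π j Q.length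
  simp only [h1, h2, true_and, and_true, and_assoc]

/-- The key identity: d + mis_j = h_j + μ_j. -/
lemma key_identity (P T Q : List α) {m n : ℕ} (hP : P.length = m)
    (hT : T.length = n) (j : ℕ) (hjm : j * Q.length + m ≤ n) :
    hammingStar P Q + misCount T Q (j * Q.length) (j * Q.length + m) =
      hamming (frag T (j * Q.length) (j * Q.length + m)) P + mu P T Q j := by
  rw [hammingStar_eq_sum P Q, hP, misCount_eq_sum T Q hT j hjm,
    hammingFrag_eq_sum P T Q hP hT j hjm, mu_eq_sum P T Q hP hT j hjm,
    ← Finset.sum_add_distrib, ← Finset.sum_add_distrib]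
  refine Finset.sum_congr rfl fun π hπ => ?_
  set x := P.getD π default
  set y := T.getD (j * Q.length + π) default
  set z := Q.getD (π % Q.length) default
  by_cases hxz : x = z <;> by_cases hyz : y = z <;> by_cases hxy : x = y <;>
    simp_all [eq_comm]

lemma misCount_add (T Q : List α) {a b c : ℕ} (h1 : a ≤ b) (h2 : b ≤ c) :
    misCount T Q a c = misCount T Q a b + misCount T Q b c := by
  unfold misCount
  rw [← Finset.Ico_union_Ico_eq_Ico h1 h2, Finset.filter_union,
    Finset.card_union_of_disjoint
      (Finset.disjoint_filter_filter (Finset.Ico_disjoint_Ico_consecutive a b c))]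

lemma misCount_nonzero (T Q : List α) {a b : ℕ} (h : misCount T Q a b ≠ 0) :
    ∃ τ, a ≤ τ ∧ τ < b ∧ τ < T.length ∧
      T.getD τ default ≠ Q.getD (τ % Q.length) default := by
  obtain ⟨τ, hτ⟩ := Finset.card_ne_zero.mp h
  rw [Finset.mem_filter, Finset.mem_Ico] at hτ
  exact ⟨τ, hτ.1.1, hτ.1.2, hτ.2.1, hτ.2.2⟩

lemma window_inj (q : ℕ) {a b : ℕ} (τ s : ℕ)
    (ha1 : a * q + s ≤ τ) (ha2 : τ < (a + 1) * q + s)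
    (hb1 : b * q + s ≤ τ) (hb2 : τ < (b + 1) * q + s) : a = b := by
  rcases lt_trichotomy a b with h | h | h
  · have h2 : (a + 1) * q ≤ b * q := Nat.mul_le_mul_right q h
    exact absurd (ha2.trans_le ((Nat.add_le_add_right h2 s).trans hb1)) (lt_irrefl τ)
  · exact h
  · have h2 : (b + 1) * q ≤ a * q := Nat.mul_le_mul_right q h
    exact absurd (hb2.trans_le ((Nat.add_le_add_right h2 s).trans ha1)) (lt_irrefl τ)

end Aux

/-- bounds on the number of changes and of small values in the sequence h_j. -/
theorem hj_changes_bound {α : Type*} [DecidableEq α] [Inhabited α]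
    (P T Q : List α) (m n : ℕ)
    (hP : P.length = m) (hT : T.length = n) (hq : Q ≠ [])
    (hmn : m ≤ n) (hn : 2 * n ≤ 3 * m) :
    ((Finset.range ((n - m) / Q.length)).filter (fun j =>
        hamming (frag T (j * Q.length) (j * Q.length + m)) P ≠
        hamming (frag T ((j + 1) * Q.length) ((j + 1) * Q.length + m)) P)).card
      ≤ hammingStar T Q * (2 * hammingStar P Q + 1) ∧
    (0 < hammingStar P Q →
      ((Finset.range ((n - m) / Q.length + 1)).filter (fun j =>
          2 * hamming (frag T (j * Q.length) (j * Q.length + m)) P ≤ hammingStar P Q)).card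
        ≤ 2 * hammingStar T Q) := by
  classical
  have hq0 : 0 < Q.length := List.length_pos_iff.mpr hq
  rcases Nat.eq_zero_or_pos m with hm0 | hm0
  · -- degenerate case m = 0 (hence n = 0)
    have hn0 : n = 0 := by omega
    have hdP : hammingStar P Q = 0 := by
      rw [hammingStar_eq_sum, hP, hm0]; simp
    constructor
    · have : (n - m) / Q.length = 0 := by simp [hn0, hm0]
      rw [this]; simp
    · intro hd0; omega
  -- main case: 0 < m
  have hnm : n - m < m := by omega
  set K := (n - m) / Q.length with hKdef
  have hKq : K * Q.length ≤ n - m := Nat.div_mul_le_self _ _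
  have hwin : ∀ j ≤ K, j * Q.length + m ≤ n := by
    intro j hj
    have : j * Q.length ≤ K * Q.length := Nat.mul_le_mul_right _ hj
    omega
  set MisT : Finset ℕ := (Finset.range n).filter
    (fun τ => T.getD τ default ≠ Q.getD (τ % Q.length) default) with hMisTdef
  set MisP : Finset ℕ := (Finset.range m).filter
    (fun π => P.getD π default ≠ Q.getD (π % Q.length) default) with hMisPdef
  have hMisT : MisT.card = hammingStar T Q := by
    rw [hammingStar_eq_sum, hT, hMisTdef, Finset.card_filter]
  have hMisP : MisP.card = hammingStar P Q := by
    rw [hammingStar_eq_sum, hP, hMisPdef, Finset.card_filter]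
  have hmem : ∀ j π, π < m → j * Q.length + m ≤ n →
      ((j * Q.length + π) ∈ MisT ↔
        T.getD (j * Q.length + π) default ≠ Q.getD (π % Q.length) default) := by
    intro j π hπ hjm
    rw [hMisTdef, Finset.mem_filter, Finset.mem_range]
    have h2 : (j * Q.length + π) % Q.length = π % Q.length := by
      rw [add_comm]; exact Nat.add_mul_mod_self_right π j Q.length
    rw [h2]
    constructor
    · exact fun h => h.2
    · exact fun h => ⟨by omega, h⟩
  -- μ_j ≤ 2·(number of aligned (P,T)-mismatch pairs at shift j)
  have hmu_le : ∀ j ≤ K, mu P T Q j ≤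
      2 * ((Finset.range m).filter
        (fun π => π ∈ MisP ∧ (j * Q.length + π) ∈ MisT)).card := by
    intro j hj
    rw [Finset.card_filter, Finset.mul_sum, mu_eq_sum P T Q hP hT j (hwin j hj)]
    refine Finset.sum_le_sum fun π hπ => ?_
    have hπm := Finset.mem_range.mp hπ
    have hmem' := hmem j π hπm (hwin j hj)
    have hmemP : π ∈ MisP ↔ P.getD π default ≠ Q.getD (π % Q.length) default := by
      rw [hMisPdef, Finset.mem_filter, Finset.mem_range]
      exact ⟨fun h => h.2, fun h => ⟨hπm, h⟩⟩
    by_cases hc : P.getD π default ≠ Q.getD (π % Q.length) default ∧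
        T.getD (j * Q.length + π) default ≠ Q.getD (π % Q.length) default
    · have hc2 : π ∈ MisP ∧ (j * Q.length + π) ∈ MisT :=
        ⟨hmemP.mpr hc.1, hmem'.mpr hc.2⟩
      rw [if_pos hc, if_pos hc2]
      split <;> omega
    · rw [if_neg hc]
      exact Nat.zero_le _
  -- μ_j ≤ 2·mis_j
  have hmu_le_mis : ∀ j ≤ K, mu P T Q j ≤
      2 * misCount T Q (j * Q.length) (j * Q.length + m) := by
    intro j hj
    rw [misCount_eq_sum T Q hT j (hwin j hj), Finset.mul_sum,
      mu_eq_sum P T Q hP hT j (hwin j hj)]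
    refine Finset.sum_le_sum fun π hπ => ?_
    by_cases hc : P.getD π default ≠ Q.getD (π % Q.length) default ∧
        T.getD (j * Q.length + π) default ≠ Q.getD (π % Q.length) default
    · rw [if_pos hc, if_pos hc.2]
      split <;> omega
    · rw [if_neg hc]
      exact Nat.zero_le _
  -- for each π, at most d' shifts put an aligned T-mismatch at π
  have hinner : ∀ π, ((Finset.range (K + 1)).filter
      (fun j => (j * Q.length + π) ∈ MisT)).card ≤ hammingStar T Q := by
    intro π
    rw [← hMisT]
    refine Finset.card_le_card_of_injOn (fun j => j * Q.length + π)
      (fun j hj => (Finset.mem_filter.mp hj).2) ?_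
    intro a _ b _ hab
    simp only [add_left_inj] at hab
    exact Nat.eq_of_mul_eq_mul_right hq0 hab
  -- total: ∑_j μ_j ≤ d·(2d')
  have hsum : ∑ j ∈ Finset.range (K + 1), mu P T Q j ≤
      hammingStar P Q * (2 * hammingStar T Q) := by
    calc ∑ j ∈ Finset.range (K + 1), mu P T Q j
        ≤ ∑ j ∈ Finset.range (K + 1), 2 * ((Finset.range m).filter
            (fun π => π ∈ MisP ∧ (j * Q.length + π) ∈ MisT)).card := by
          refine Finset.sum_le_sum fun j hj => hmu_le j (by
            have := Finset.mem_range.mp hj; omega)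
      _ = 2 * ∑ j ∈ Finset.range (K + 1), ∑ π ∈ Finset.range m,
            (if π ∈ MisP ∧ (j * Q.length + π) ∈ MisT then 1 else 0) := by
          rw [← Finset.mul_sum]
          congr 1
          exact Finset.sum_congr rfl fun j _ => Finset.card_filter _ _
      _ = 2 * ∑ π ∈ Finset.range m, ∑ j ∈ Finset.range (K + 1),
            (if π ∈ MisP ∧ (j * Q.length + π) ∈ MisT then 1 else 0) := by
          rw [Finset.sum_comm]
      _ ≤ 2 * ∑ π ∈ Finset.range m,
            (if π ∈ MisP then hammingStar T Q else 0) := by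
          refine Nat.mul_le_mul_left 2 (Finset.sum_le_sum fun π _ => ?_)
          by_cases hA : π ∈ MisP
          · simp only [hA, true_and, if_true]
            calc ∑ j ∈ Finset.range (K + 1),
                  (if (j * Q.length + π) ∈ MisT then 1 else 0)
                = ((Finset.range (K + 1)).filter
                    (fun j => (j * Q.length + π) ∈ MisT)).card :=
                  (Finset.card_filter _ _).symm
              _ ≤ hammingStar T Q := hinner π
          · simp [hA]
      _ = 2 * (MisP.card * hammingStar T Q) := by
          rw [Finset.sum_ite_mem, Finset.inter_eq_right.mpr
            (show MisP ⊆ Finset.range m by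
              rw [hMisPdef]; exact Finset.filter_subset _ _),
            Finset.sum_const, smul_eq_mul]
      _ = hammingStar P Q * (2 * hammingStar T Q) := by
          rw [hMisP]; ring
  -- number of shifts with μ_j ≠ 0 is ≤ d·d'
  have hMcard : ((Finset.range (K + 1)).filter (fun j => mu P T Q j ≠ 0)).card ≤
      hammingStar P Q * hammingStar T Q := by
    have hex : ∀ j, ∃ π, j ∈ (Finset.range (K + 1)).filter (fun j => mu P T Q j ≠ 0) →
        (π ∈ MisP ∧ (j * Q.length + π) ∈ MisT) := by
      intro j
      by_cases hj : j ∈ (Finset.range (K + 1)).filter (fun j => mu P T Q j ≠ 0)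
      · obtain ⟨hj1, hj2⟩ := Finset.mem_filter.mp hj
        have hjK : j ≤ K := by have := Finset.mem_range.mp hj1; omega
        rw [mu_eq_sum P T Q hP hT j (hwin j hjK)] at hj2
        obtain ⟨π, hπ, hπne⟩ := Finset.exists_ne_zero_of_sum_ne_zero hj2
        have hπm := Finset.mem_range.mp hπ
        have hc : P.getD π default ≠ Q.getD (π % Q.length) default ∧
            T.getD (j * Q.length + π) default ≠ Q.getD (π % Q.length) default := by
          by_contra hc
          rw [if_neg hc] at hπne
          exact hπne rfl
        refine ⟨π, fun _ => ⟨?_, ?_⟩⟩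
        · rw [hMisPdef, Finset.mem_filter, Finset.mem_range]; exact ⟨hπm, hc.1⟩
        · exact (hmem j π hπm (hwin j hjK)).mpr hc.2
      · exact ⟨0, fun h => absurd h hj⟩
    choose g hg using hex
    have hcard : (MisP ×ˢ MisT).card = hammingStar P Q * hammingStar T Q := by
      rw [Finset.card_product, hMisP, hMisT]
    rw [← hcard]
    refine Finset.card_le_card_of_injOn (fun j => (g j, j * Q.length + g j))
      (fun j hj => Finset.mem_product.mpr (hg j hj)) ?_
    intro a ha b hb hab
    simp only [Prod.mk.injEq] at hab
    have : a * Q.length = b * Q.length := by omega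
    exact Nat.eq_of_mul_eq_mul_right hq0 this
  constructor
  · -- first claim
    have hsub : (Finset.range K).filter (fun j =>
          hamming (frag T (j * Q.length) (j * Q.length + m)) P ≠
          hamming (frag T ((j + 1) * Q.length) ((j + 1) * Q.length + m)) P) ⊆
        ((Finset.range K).filter (fun j =>
          misCount T Q (j * Q.length) (j * Q.length + m) ≠
          misCount T Q ((j + 1) * Q.length) ((j + 1) * Q.length + m))) ∪
        ((Finset.range K).filter (fun j => mu P T Q j ≠ 0 ∨ mu P T Q (j + 1) ≠ 0)) := by
      intro j hj
      obtain ⟨hj1, hj2⟩ := Finset.mem_filter.mp hj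
      have hjK : j < K := Finset.mem_range.mp hj1
      rw [Finset.mem_union, Finset.mem_filter, Finset.mem_filter]
      by_contra hcon
      push_neg at hcon
      obtain ⟨hc1, hc2⟩ := hcon
      have hmis := hc1 hj1
      obtain ⟨hmu1, hmu2⟩ := hc2 hj1
      have k1 := key_identity P T Q hP hT j (hwin j (by omega))
      have k2 := key_identity P T Q hP hT (j + 1) (hwin (j + 1) (by omega))
      omega
    have hS1 : ((Finset.range K).filter (fun j =>
          misCount T Q (j * Q.length) (j * Q.length + m) ≠
          misCount T Q ((j + 1) * Q.length) ((j + 1) * Q.length + m))).card ≤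
        hammingStar T Q := by
      rcases Nat.eq_zero_or_pos K with hK0 | hK0
      · rw [hK0]; simp
      have hqnm : Q.length ≤ n - m := by
        have := Nat.mul_le_mul_right Q.length hK0
        simpa using this.trans hKq
      have hqm : Q.length ≤ m := by omega
      have hex : ∀ j, ∃ τ, j ∈ (Finset.range K).filter (fun j =>
            misCount T Q (j * Q.length) (j * Q.length + m) ≠
            misCount T Q ((j + 1) * Q.length) ((j + 1) * Q.length + m)) →
          (τ ∈ MisT ∧
           ((j * Q.length ≤ τ ∧ τ < (j + 1) * Q.length) ∨
            (j * Q.length + m ≤ τ ∧ τ < (j + 1) * Q.length + m))) := by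
        intro j
        by_cases hj : j ∈ (Finset.range K).filter (fun j =>
            misCount T Q (j * Q.length) (j * Q.length + m) ≠
            misCount T Q ((j + 1) * Q.length) ((j + 1) * Q.length + m))
        · obtain ⟨hj1, hj2⟩ := Finset.mem_filter.mp hj
          have hjK : j < K := Finset.mem_range.mp hj1
          have hq1 : j * Q.length ≤ (j + 1) * Q.length := by
            exact Nat.mul_le_mul_right _ (by omega)
          have hq2 : (j + 1) * Q.length ≤ j * Q.length + m := by
            have : (j + 1) * Q.length = j * Q.length + Q.length := by ring
            omega
          have e1 := misCount_add T Q hq1 hq2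
          have e2 := misCount_add T Q hq2 (by omega :
            j * Q.length + m ≤ (j + 1) * Q.length + m)
          have hne : misCount T Q (j * Q.length) ((j + 1) * Q.length) ≠
              misCount T Q (j * Q.length + m) ((j + 1) * Q.length + m) := by
            intro h; apply hj2
            rw [e1, e2, h]; ring
          have : misCount T Q (j * Q.length) ((j + 1) * Q.length) ≠ 0 ∨
              misCount T Q (j * Q.length + m) ((j + 1) * Q.length + m) ≠ 0 := by
            by_contra hcc
            push_neg at hcc
            omega
          rcases this with h0 | h0
          · obtain ⟨τ, hτ1, hτ2, hτ3, hτ4⟩ := misCount_nonzero T Q h0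
            refine ⟨τ, fun _ => ⟨?_, Or.inl ⟨hτ1, hτ2⟩⟩⟩
            rw [hMisTdef, Finset.mem_filter, Finset.mem_range]
            exact ⟨by omega, hτ4⟩
          · obtain ⟨τ, hτ1, hτ2, hτ3, hτ4⟩ := misCount_nonzero T Q h0
            refine ⟨τ, fun _ => ⟨?_, Or.inr ⟨hτ1, hτ2⟩⟩⟩
            rw [hMisTdef, Finset.mem_filter, Finset.mem_range]
            exact ⟨by omega, hτ4⟩
        · exact ⟨0, fun h => absurd h hj⟩
      choose g hg using hex
      rw [← hMisT]
      refine Finset.card_le_card_of_injOn g (fun j hj => (hg j hj).1) ?_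
      intro a ha b hb hab
      have hA := (hg a ha).2
      have hB := (hg b hb).2
      rw [hab] at hA
      have haK : a < K := Finset.mem_range.mp (Finset.mem_filter.mp ha).1
      have hbK : b < K := Finset.mem_range.mp (Finset.mem_filter.mp hb).1
      have haU : (a + 1) * Q.length ≤ n - m := by
        calc (a + 1) * Q.length ≤ K * Q.length := Nat.mul_le_mul_right _ (by omega)
          _ ≤ n - m := hKq
      have hbU : (b + 1) * Q.length ≤ n - m := by
        calc (b + 1) * Q.length ≤ K * Q.length := Nat.mul_le_mul_right _ (by omega)
          _ ≤ n - m := hKq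
      rcases hA with ⟨h1, h2⟩ | ⟨h1, h2⟩ <;> rcases hB with ⟨h3, h4⟩ | ⟨h3, h4⟩
      · exact window_inj Q.length (g b) 0 (by omega) (by omega) (by omega) (by omega)
      · omega
      · omega
      · exact window_inj Q.length (g b) m h1 h2 h3 h4
    have hS2 : ((Finset.range K).filter
        (fun j => mu P T Q j ≠ 0 ∨ mu P T Q (j + 1) ≠ 0)).card ≤
        2 * (hammingStar P Q * hammingStar T Q) := by
      have hA : ((Finset.range K).filter (fun j => mu P T Q j ≠ 0)).card ≤
          hammingStar P Q * hammingStar T Q := by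
        refine le_trans (Finset.card_le_card ?_) hMcard
        intro j hj
        rw [Finset.mem_filter] at hj ⊢
        exact ⟨Finset.mem_range.mpr (by have := Finset.mem_range.mp hj.1; omega), hj.2⟩
      have hB : ((Finset.range K).filter (fun j => mu P T Q (j + 1) ≠ 0)).card ≤
          hammingStar P Q * hammingStar T Q := by
        refine le_trans (Finset.card_le_card_of_injOn (· + 1) ?_ ?_) hMcard
        · intro j hj
          simp only [Finset.mem_coe, Finset.mem_filter, Finset.mem_range] at hj ⊢
          exact ⟨by omega, hj.2⟩
        · intro a _ b _ hab; simpa using hab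
      calc ((Finset.range K).filter
            (fun j => mu P T Q j ≠ 0 ∨ mu P T Q (j + 1) ≠ 0)).card
          ≤ ((Finset.range K).filter (fun j => mu P T Q j ≠ 0)).card +
            ((Finset.range K).filter (fun j => mu P T Q (j + 1) ≠ 0)).card := by
            rw [Finset.filter_or]
            exact Finset.card_union_le _ _
        _ ≤ 2 * (hammingStar P Q * hammingStar T Q) := by omega
    calc ((Finset.range K).filter (fun j =>
            hamming (frag T (j * Q.length) (j * Q.length + m)) P ≠
            hamming (frag T ((j + 1) * Q.length) ((j + 1) * Q.length + m)) P)).card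
        ≤ _ := Finset.card_le_card hsub
      _ ≤ _ + _ := Finset.card_union_le _ _
      _ ≤ hammingStar T Q * (2 * hammingStar P Q + 1) := by
          have h1 : hammingStar T Q * (2 * hammingStar P Q + 1) =
            hammingStar T Q + 2 * (hammingStar P Q * hammingStar T Q) := by ring
          omega
  · -- second claim
    intro hd0
    have hS3 : ∀ j ∈ (Finset.range (K + 1)).filter (fun j =>
        2 * hamming (frag T (j * Q.length) (j * Q.length + m)) P ≤ hammingStar P Q),
        hammingStar P Q ≤ mu P T Q j := by
      intro j hj
      obtain ⟨hj1, hj2⟩ := Finset.mem_filter.mp hj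
      have hjK : j ≤ K := by have := Finset.mem_range.mp hj1; omega
      have k1 := key_identity P T Q hP hT j (hwin j hjK)
      have k2 := hmu_le_mis j hjK
      omega
    have hcard : hammingStar P Q * ((Finset.range (K + 1)).filter (fun j =>
        2 * hamming (frag T (j * Q.length) (j * Q.length + m)) P ≤
          hammingStar P Q)).card ≤
        hammingStar P Q * (2 * hammingStar T Q) := by
      calc hammingStar P Q * _ = _ • hammingStar P Q := by
            rw [smul_eq_mul, mul_comm]
        _ ≤ ∑ j ∈ (Finset.range (K + 1)).filter (fun j =>
              2 * hamming (frag T (j * Q.length) (j * Q.length + m)) P ≤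
                hammingStar P Q), mu P T Q j := Finset.card_nsmul_le_sum _ _ _ hS3
        _ ≤ ∑ j ∈ Finset.range (K + 1), mu P T Q j :=
            Finset.sum_le_sum_of_subset (Finset.filter_subset _ _)
        _ ≤ hammingStar P Q * (2 * hammingStar T Q) := hsum
    exact Nat.le_of_mul_le_mul_left hcard hd0
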